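/- Let H be a perfect Abelian Polish group in which the set of elements of order greater than 2 is dense. Then for any nonempty open sets U₀,…,U_{n-1} ⊆ H there exist pairwise disjoint nonempty open sets Vᵢ ⊆ Uᵢ (i < n) such that {Vᵢ : i < n} is an n-good qif. -/

import Mathlib

open Set Filter Topology

def GoodQif {H : Type*} [AddCommGroup H] (n : ℕ) (𝒱 : Set (Set H)) : Prop :=
  (∀ V ∈ 𝒱, V.Nonempty) ∧ (n : ℕ∞) ≤ 𝒱.encard ∧ 𝒱.PairwiseDisjoint id ∧
  ∀ V : Fin n → Set H, Function.Injective V → (∀ i, V i ∈ 𝒱) →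
    ∀ (b bb : Fin n → H) (ι ιι : Fin n → ℤ),
      (∀ i, b i ∈ V i) → (∀ i, bb i ∈ V i) →
      (∀ i, |ι i| ≤ 1) → (∀ i, |ιι i| ≤ 1) →
      (∑ i, (ι i + ιι i) ^ 2 ≠ 0) →
      ∑ i, (ι i • b i + ιι i • bb i) ≠ 0

section Aux

variable {H : Type*} [AddCommGroup H] [TopologicalSpace H] [IsTopologicalAddGroup H]

lemma sum_sq_ne_zero_iff {n : ℕ} (c : Fin n → ℤ) :
    (∑ i, (c i) ^ 2 ≠ 0) ↔ ∃ i, c i ≠ 0 := by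
  rw [Ne, Finset.sum_eq_zero_iff_of_nonneg (fun i _ => sq_nonneg (c i))]
  push_neg
  simp [pow_eq_zero_iff]

/-- complement of any singleton is dense in a perfect space -/
lemma dense_compl_singleton_of_perfect (hperf : Perfect (Set.univ : Set H)) (x : H) :
    Dense ({x}ᶜ : Set H) := by
  have h : AccPt x (𝓟 (Set.univ : Set H)) := hperf.acc x (mem_univ x)
  have : Filter.NeBot (𝓝[≠] x) := by
    rw [AccPt, principal_univ, inf_top_eq] at h
    exact h
  exact dense_compl_singleton x

lemma dense_compl_double (hdense : Dense {a : H | a + a ≠ 0}) (t : H) :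
    Dense {y : H | y + y ≠ t} := by
  by_cases h : ∃ y₀ : H, y₀ + y₀ = t
  · obtain ⟨y₀, hy₀⟩ := h
    have heq : {y : H | y + y ≠ t} = (fun z => z - y₀) ⁻¹' {a | a + a ≠ 0} := by
      ext y
      simp only [mem_setOf_eq, mem_preimage]
      constructor
      · intro hy hc
        apply hy
        have : y + y = (y - y₀) + (y - y₀) + (y₀ + y₀) := by abel
        rw [this, hc, zero_add, hy₀]
      · intro hy hc
        apply hy
        have : (y - y₀) + (y - y₀) = (y + y) - (y₀ + y₀) := by abel
        rw [this, hc, hy₀, sub_self]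
    rw [heq]
    exact hdense.preimage (Homeomorph.subRight y₀).isOpenMap
  · have heq : {y : H | y + y ≠ t} = univ := by
      ext y; simp only [mem_setOf_eq, mem_univ, iff_true]
      exact fun hc => h ⟨y, hc⟩
    rw [heq]; exact dense_univ

lemma dense_compl_zsmul (hperf : Perfect (Set.univ : Set H))
    (hdense : Dense {a : H | a + a ≠ 0}) (c : ℤ) (hc0 : c ≠ 0) (hc2 : |c| ≤ 2) (s : H) :
    Dense {y : H | c • y + s ≠ 0} := by
  rw [abs_le] at hc2
  obtain ⟨h1, h2⟩ := hc2
  interval_cases c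
  · -- c = -2
    have heq : {y : H | (-2 : ℤ) • y + s ≠ 0} = {y : H | y + y ≠ s} := by
      ext y
      simp only [mem_setOf_eq, neg_smul, two_zsmul]
      rw [not_iff_not, neg_add_eq_zero, eq_comm]
    rw [heq]; exact dense_compl_double hdense s
  · -- c = -1
    have heq : {y : H | (-1 : ℤ) • y + s ≠ 0} = ({s}ᶜ : Set H) := by
      ext y
      simp only [mem_setOf_eq, neg_smul, one_smul, mem_compl_iff, mem_singleton_iff]
      rw [not_iff_not, neg_add_eq_zero]
    rw [heq]; exact dense_compl_singleton_of_perfect hperf s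
  · exact absurd rfl hc0
  · -- c = 1
    have heq : {y : H | (1 : ℤ) • y + s ≠ 0} = ({-s}ᶜ : Set H) := by
      ext y
      simp only [mem_setOf_eq, one_smul, mem_compl_iff, mem_singleton_iff]
      rw [not_iff_not, add_eq_zero_iff_eq_neg]
    rw [heq]; exact dense_compl_singleton_of_perfect hperf (-s)
  · -- c = 2
    have heq : {y : H | (2 : ℤ) • y + s ≠ 0} = {y : H | y + y ≠ -s} := by
      ext y
      simp only [mem_setOf_eq, two_zsmul]
      rw [not_iff_not, add_eq_zero_iff_eq_neg]
    rw [heq]; exact dense_compl_double hdense (-s)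

end Aux


lemma exists_generic_points {H : Type*} [AddCommGroup H] [TopologicalSpace H]
    [IsTopologicalAddGroup H] [PolishSpace H]
    (hperf : Perfect (Set.univ : Set H)) (hdense : Dense {a : H | a + a ≠ 0}) :
    ∀ (n : ℕ) (U : Fin n → Set H), (∀ i, IsOpen (U i)) → (∀ i, (U i).Nonempty) →
    ∃ x : Fin n → H, (∀ i, x i ∈ U i) ∧
      ∀ c : Fin n → ℤ, (∀ i, |c i| ≤ 2) → (∃ i, c i ≠ 0) → ∑ i, c i • x i ≠ 0 := by
  classical
  intro n
  induction n with
  | zero =>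
    intro U _ _
    exact ⟨fun i => i.elim0, fun i => i.elim0, fun c _ h => absurd h (by simp [Fin.elim0])⟩
  | succ n ih =>
    intro U hUo hUne
    obtain ⟨x', hx'U, hx'⟩ := ih (fun i => U i.castSucc) (fun i => hUo _) (fun i => hUne _)
    set e5 : Fin 5 → ℤ := ![-2, -1, 0, 1, 2] with he5
    have he5abs : ∀ j : Fin 5, |e5 j| ≤ 2 := by decide
    have hsurj : ∀ c : ℤ, |c| ≤ 2 → ∃ j : Fin 5, e5 j = c := by
      intro c hc
      rw [abs_le] at hc
      obtain ⟨h1, h2⟩ := hc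
      interval_cases c
      exacts [⟨0, rfl⟩, ⟨1, rfl⟩, ⟨2, rfl⟩, ⟨3, rfl⟩, ⟨4, rfl⟩]
    set G : (Fin n → Fin 5) × Fin 5 → Set H := fun q =>
      if e5 q.2 = 0 then univ else {y : H | e5 q.2 • y + ∑ i, e5 (q.1 i) • x' i ≠ 0} with hG
    have hGo : ∀ q, IsOpen (G q) := by
      intro q
      rw [hG]
      dsimp only
      split_ifs with h
      · exact isOpen_univ
      · have hcont : Continuous fun y : H => e5 q.2 • y + ∑ i, e5 (q.1 i) • x' i :=
          (continuous_zsmul _).add continuous_const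
        have : {y : H | e5 q.2 • y + ∑ i, e5 (q.1 i) • x' i ≠ 0}
            = ((fun y : H => e5 q.2 • y + ∑ i, e5 (q.1 i) • x' i) ⁻¹' {0})ᶜ := rfl
        rw [this]
        exact (isClosed_singleton.preimage hcont).isOpen_compl
    have hGd : ∀ q, Dense (G q) := by
      intro q
      rw [hG]
      dsimp only
      split_ifs with h
      · exact dense_univ
      · exact dense_compl_zsmul hperf hdense _ h (he5abs _) _
    have hDd : Dense (⋂ q, G q) := by
      letI := TopologicalSpace.upgradeIsCompletelyMetrizable H
      exact dense_iInter_of_isOpen hGo hGd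
    obtain ⟨xn, hxnU, hxnD⟩ := hDd.inter_open_nonempty (U (Fin.last n)) (hUo _) (hUne _)
    refine ⟨Fin.snoc x' xn, ?_, ?_⟩
    · intro i
      refine Fin.lastCases ?_ ?_ i
      · rw [Fin.snoc_last]; exact hxnU
      · intro j; rw [Fin.snoc_castSucc]; exact hx'U j
    · intro c hc hcne
      rw [Fin.sum_univ_castSucc]
      simp only [Fin.snoc_castSucc, Fin.snoc_last]
      by_cases hlast : c (Fin.last n) = 0
      · rw [hlast, zero_smul, add_zero]
        obtain ⟨i0, hi0⟩ := hcne
        have : i0 ≠ Fin.last n := fun h => hi0 (h ▸ hlast)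
        obtain ⟨j0, hj0⟩ := Fin.exists_castSucc_eq.mpr this
        exact hx' (fun i => c i.castSucc) (fun i => hc _) ⟨j0, by simp only [hj0]; exact hi0⟩
      · obtain ⟨j, hj⟩ := hsurj (c (Fin.last n)) (hc _)
        choose p hp using fun i : Fin n => hsurj (c i.castSucc) (hc _)
        have hmem := mem_iInter.mp hxnD (p, j)
        rw [hG] at hmem
        simp only at hmem
        rw [if_neg (by rw [hj]; exact hlast)] at hmem
        simp only [mem_setOf_eq, hj, hp] at hmem
        intro h0
        exact hmem (by rw [add_comm] at h0; exact h0)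

theorem exists_goodQif_of_dense_order_gt_two {H : Type*} [AddCommGroup H]
    [TopologicalSpace H] [IsTopologicalAddGroup H] [PolishSpace H]
    (hperf : Perfect (Set.univ : Set H))
    (hdense : Dense {a : H | a + a ≠ 0})
    (n : ℕ) (U : Fin n → Set H)
    (hUo : ∀ i, IsOpen (U i)) (hUne : ∀ i, (U i).Nonempty) :
    ∃ V : Fin n → Set H,
      (∀ i, IsOpen (V i)) ∧ (∀ i, (V i).Nonempty) ∧ (∀ i, V i ⊆ U i) ∧
      Pairwise (Function.onFun Disjoint V) ∧ GoodQif n (Set.range V) := by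
  classical
  obtain ⟨x, hxU, hx⟩ := exists_generic_points hperf hdense n U hUo hUne
  set e3 : Fin 3 → ℤ := ![-1, 0, 1] with he3
  have he3abs : ∀ j : Fin 3, |e3 j| ≤ 1 := by decide
  have hsurj3 : ∀ c : ℤ, |c| ≤ 1 → ∃ j : Fin 3, e3 j = c := by
    intro c hc
    rw [abs_le] at hc
    obtain ⟨h1, h2⟩ := hc
    interval_cases c
    exacts [⟨0, rfl⟩, ⟨1, rfl⟩, ⟨2, rfl⟩]
  set F : (Fin n → Fin 3 × Fin 3) → ((Fin n → H) × (Fin n → H)) → H :=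
    fun p z => ∑ i, (e3 (p i).1 • z.1 i + e3 (p i).2 • z.2 i) with hF
  set A : Set ((Fin n → H) × (Fin n → H)) :=
    ⋂ p : Fin n → Fin 3 × Fin 3,
      if (∑ i, (e3 (p i).1 + e3 (p i).2) ^ 2) = 0 then univ else {z | F p z ≠ 0} with hA
  have hAopen : IsOpen A := by
    apply isOpen_iInter_of_finite
    intro p
    split_ifs with h
    · exact isOpen_univ
    · have hcont : Continuous (F p) := by
        apply continuous_finset_sum
        intro i _
        exact ((continuous_zsmul _).comp ((continuous_apply i).comp continuous_fst)).add
          ((continuous_zsmul _).comp ((continuous_apply i).comp continuous_snd))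
      have : {z | F p z ≠ 0} = (F p ⁻¹' {0})ᶜ := rfl
      rw [this]
      exact (isClosed_singleton.preimage hcont).isOpen_compl
  have hxA : (x, x) ∈ A := by
    rw [hA, mem_iInter]
    intro p
    split_ifs with h
    · trivial
    · simp only [mem_setOf_eq, hF]
      have heq : ∑ i, (e3 (p i).1 • x i + e3 (p i).2 • x i)
          = ∑ i, (e3 (p i).1 + e3 (p i).2) • x i :=
        Finset.sum_congr rfl fun i _ => (add_smul _ _ _).symm
      rw [heq]
      exact hx _ (fun i => (abs_add_le _ _).trans (add_le_add (he3abs _) (he3abs _)))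
        ((sum_sq_ne_zero_iff _).mp h)
  have hA_nhds : A ∈ 𝓝 (x, x) := hAopen.mem_nhds hxA
  rw [nhds_prod_eq] at hA_nhds
  obtain ⟨s, hs, t, ht, hst⟩ := Filter.mem_prod_iff.mp hA_nhds
  have hst' : s ∩ t ∈ 𝓝 x := inter_mem hs ht
  rw [nhds_pi] at hst'
  obtain ⟨I, hIfin, w, hw, hwsub⟩ := Filter.mem_pi.mp hst'
  choose W hWsub hWo hWx using fun i => mem_nhds_iff.mp (hw i)
  set V : Fin n → Set H := fun i => W i ∩ U i with hV
  have hVo : ∀ i, IsOpen (V i) := fun i => (hWo i).inter (hUo i)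
  have hVx : ∀ i, x i ∈ V i := fun i => ⟨hWx i, hxU i⟩
  have hVne : ∀ i, (V i).Nonempty := fun i => ⟨x i, hVx i⟩
  have hVU : ∀ i, V i ⊆ U i := fun i => inter_subset_right
  have hmemst : ∀ b : Fin n → H, (∀ i, b i ∈ V i) → b ∈ s ∩ t := by
    intro b hb
    apply hwsub
    intro i _
    exact hWsub i (hb i).1
  have Key : ∀ (ι ιι : Fin n → ℤ), (∀ i, |ι i| ≤ 1) → (∀ i, |ιι i| ≤ 1) →
      (∑ i, (ι i + ιι i) ^ 2 ≠ 0) → ∀ b bb : Fin n → H,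
      (∀ i, b i ∈ V i) → (∀ i, bb i ∈ V i) →
      ∑ i, (ι i • b i + ιι i • bb i) ≠ 0 := by
    intro ι ιι hι hιι hvalid b bb hb hbb
    choose p1 hp1 using fun i => hsurj3 (ι i) (hι i)
    choose p2 hp2 using fun i => hsurj3 (ιι i) (hιι i)
    set p : Fin n → Fin 3 × Fin 3 := fun i => (p1 i, p2 i) with hp
    have hbA : (b, bb) ∈ A := hst ⟨(hmemst b hb).1, (hmemst bb hbb).2⟩
    have hmem := mem_iInter.mp hbA p
    rw [if_neg] at hmem
    · simp only [mem_setOf_eq, hF, hp, hp1, hp2] at hmem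
      exact hmem
    · simp only [hp, hp1, hp2]
      exact hvalid
  have hdisj : Pairwise (Function.onFun Disjoint V) := by
    intro i j hij
    rw [Function.onFun, Set.disjoint_left]
    intro y hyi hyj
    set ι : Fin n → ℤ := fun k => if k = i then 1 else if k = j then -1 else 0 with hι
    set b : Fin n → H := fun k => if k = i then y else if k = j then y else x k with hb
    have hbmem : ∀ k, b k ∈ V k := by
      intro k
      rw [hb]
      dsimp only
      split_ifs with h1 h2
      · exact h1 ▸ hyi
      · exact h2 ▸ hyj
      · exact hVx k
    have hιabs : ∀ k, |ι k| ≤ 1 := by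
      intro k
      rw [hι]
      dsimp only
      split_ifs <;> norm_num
    have hvalid : ∑ k, (ι k + (0 : Fin n → ℤ) k) ^ 2 ≠ 0 := by
      apply (sum_sq_ne_zero_iff _).mpr
      refine ⟨i, ?_⟩
      simp [hι]
    have := Key ι 0 hιabs (by intro k; norm_num) hvalid b x hbmem hVx
    apply this
    have hzero : ∀ k, k ∉ ({i, j} : Finset (Fin n)) → ι k • b k + (0 : Fin n → ℤ) k • x k = 0 := by
      intro k hk
      simp only [Finset.mem_insert, Finset.mem_singleton, not_or] at hk
      simp [hι, hk.1, hk.2]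
    rw [← Finset.sum_subset (Finset.subset_univ {i, j}) (fun k _ hk => hzero k hk)]
    rw [Finset.sum_pair hij]
    simp [hι, hb, hij.symm]
  have hVinj : Function.Injective V := by
    intro i j hij
    by_contra hne
    obtain ⟨y, hy⟩ := hVne i
    exact Set.disjoint_left.mp (hdisj hne) hy (hij ▸ hy)
  refine ⟨V, hVo, hVne, hVU, hdisj, ?_, ?_, ?_, ?_⟩
  · rintro _ ⟨i, rfl⟩
    exact hVne i
  · rw [← image_univ, Set.InjOn.encard_image (hVinj.injOn)]
    simp [Set.encard_univ]
  · rintro _ ⟨i, rfl⟩ _ ⟨j, rfl⟩ hne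
    exact hdisj fun h => hne (congrArg V h)
  · intro V' hV'inj hV'mem b bb ι ιι hb hbb hι hιι hvalid
    choose σ hσ using fun i => hV'mem i
    have hσinj : Function.Injective σ := by
      intro i j h
      apply hV'inj
      rw [← hσ i, ← hσ j, h]
    have hσbij : Function.Bijective σ := Finite.injective_iff_bijective.mp hσinj
    set e : Fin n ≃ Fin n := Equiv.ofBijective σ hσbij with he
    have hcomp : ∀ k, V (σ (e.symm k)) = V k := by
      intro k
      have : σ (e.symm k) = k := e.apply_symm_apply k
      rw [this]
    have hbm : ∀ k, b (e.symm k) ∈ V k := by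
      intro k; rw [← hcomp k, hσ]; exact hb (e.symm k)
    have hbbm : ∀ k, bb (e.symm k) ∈ V k := by
      intro k; rw [← hcomp k, hσ]; exact hbb (e.symm k)
    have hval' : ∑ k, (ι (e.symm k) + ιι (e.symm k)) ^ 2 ≠ 0 := by
      rw [Equiv.sum_comp e.symm (fun i => (ι i + ιι i) ^ 2)]
      exact hvalid
    have := Key (fun k => ι (e.symm k)) (fun k => ιι (e.symm k)) (fun k => hι _)
      (fun k => hιι _) hval' (fun k => b (e.symm k)) (fun k => bb (e.symm k)) hbm hbbm
    rw [Equiv.sum_comp e.symm (fun i => ι i • b i + ιι i • bb i)] at this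
    exact this
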